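/- Define T(h) = 4∫₀¹ dx/(√(1−x²)·√(1−(1−h²)x²)) for h ∈ (0,1). Then T is differentiable on (0,1), T'(h) < 0, and there exists C > 1 such that for all h ∈ (0,1): 1/(C·h) ≤ −T'(h) ≤ C/h. -/

import Mathlib

open Real Set MeasureTheory

lemma aux_int_sqrt : IntegrableOn (fun x : ℝ => 1 / Real.sqrt (1 - x)) (Ioo (0:ℝ) 1) := by
  have h1 : IntervalIntegrable (fun y : ℝ => y ^ (-(1:ℝ)/2)) volume 0 1 :=
    intervalIntegral.intervalIntegrable_rpow' (by norm_num)
  have h2 : IntervalIntegrable (fun x : ℝ => (1 - x) ^ (-(1:ℝ)/2)) volume 0 1 := by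
    have := h1.comp_sub_left 1
    simpa using this.symm
  have h3 : IntegrableOn (fun x : ℝ => (1 - x) ^ (-(1:ℝ)/2)) (Ioo (0:ℝ) 1) :=
    (intervalIntegrable_iff_integrableOn_Ioo_of_le (by norm_num)).1 h2
  refine h3.congr_fun (fun x hx => ?_) measurableSet_Ioo
  have hx1 : (0:ℝ) < 1 - x := by linarith [hx.2]
  beta_reduce; rw [Real.rpow_def_of_pos hx1]
  rw [Real.sqrt_eq_rpow, Real.rpow_def_of_pos hx1, one_div, ← Real.exp_neg]
  ring_nf

lemma aux_key_ineq {x h : ℝ} (hx0 : 0 ≤ x) (hx1 : x ≤ 1) (hh0 : 0 ≤ h) (hh1 : h ≤ 1) :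
    (1 - x) + h ^ 2 ≤ 4 * (1 - (1 - h ^ 2) * x ^ 2) := by
  have hh2 : h ^ 2 ≤ 1 := by nlinarith
  rcases le_or_gt (4 * x ^ 2) 1 with hc | hc
  · nlinarith [mul_nonneg (sub_nonneg.2 hh2) (sub_nonneg.2 hc), mul_nonneg (sub_nonneg.2 hx1) hx0]
  · nlinarith [mul_nonneg (sq_nonneg h) (by linarith : (0:ℝ) ≤ 4 * x ^ 2 - 1),
      mul_nonneg (sub_nonneg.2 hx1) hx0]

lemma aux_D_pos {x : ℝ} (hx : x ∈ Ioo (0:ℝ) 1) (h : ℝ) : 0 < 1 - (1 - h ^ 2) * x ^ 2 := by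
  nlinarith [hx.1, hx.2, sq_nonneg h, sq_nonneg (h * x)]

lemma aux_deriv {x : ℝ} (hx : x ∈ Ioo (0:ℝ) 1) (h : ℝ) :
    HasDerivAt (fun h : ℝ => 1 / (Real.sqrt (1 - x ^ 2) * Real.sqrt (1 - (1 - h ^ 2) * x ^ 2)))
      (-(h * x ^ 2 / (Real.sqrt (1 - x ^ 2) *
        (Real.sqrt (1 - (1 - h ^ 2) * x ^ 2) * (1 - (1 - h ^ 2) * x ^ 2))))) h := by
  have hx2 : 0 < 1 - x ^ 2 := by nlinarith [hx.1, hx.2]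
  have hc : 0 < Real.sqrt (1 - x ^ 2) := Real.sqrt_pos.2 hx2
  have hD : 0 < 1 - (1 - h ^ 2) * x ^ 2 := aux_D_pos hx h
  have hsD : 0 < Real.sqrt (1 - (1 - h ^ 2) * x ^ 2) := Real.sqrt_pos.2 hD
  have h1 : HasDerivAt (fun h : ℝ => 1 - (1 - h ^ 2) * x ^ 2) (2 * h * x ^ 2) h := by
    have := (((hasDerivAt_pow 2 h).const_sub 1).mul_const (x ^ 2)).const_sub 1
    refine this.congr_deriv ?_
    ring
  have h2 := (h1.sqrt hD.ne').const_mul (Real.sqrt (1 - x ^ 2))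
  have h3 := h2.inv (by positivity)
  have heq : (fun h : ℝ => 1 / (Real.sqrt (1 - x ^ 2) * Real.sqrt (1 - (1 - h ^ 2) * x ^ 2)))
      = fun h : ℝ => (Real.sqrt (1 - x ^ 2) * Real.sqrt (1 - (1 - h ^ 2) * x ^ 2))⁻¹ := by
    funext y; rw [one_div]
  rw [heq]
  refine h3.congr_deriv (Eq.symm ?_)
  have e1 : Real.sqrt (1 - (1 - h ^ 2) * x ^ 2) * Real.sqrt (1 - (1 - h ^ 2) * x ^ 2)
      = 1 - (1 - h ^ 2) * x ^ 2 := Real.mul_self_sqrt hD.le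
  have e2 : Real.sqrt (1 - x ^ 2) * Real.sqrt (1 - x ^ 2) = 1 - x ^ 2 :=
    Real.mul_self_sqrt hx2.le
  have e3 : (Real.sqrt (1 - x ^ 2) * Real.sqrt (1 - (1 - h ^ 2) * x ^ 2)) ^ 2
      = (1 - x ^ 2) * (1 - (1 - h ^ 2) * x ^ 2) := by
    rw [mul_pow, Real.sq_sqrt hx2.le, Real.sq_sqrt hD.le]
  rw [e3, show Real.sqrt (1 - x ^ 2) * (2 * h * x ^ 2 / (2 * Real.sqrt (1 - (1 - h ^ 2) * x ^ 2)))
      = Real.sqrt (1 - x ^ 2) * h * x ^ 2 / Real.sqrt (1 - (1 - h ^ 2) * x ^ 2) from by ring,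
    neg_div, div_div, neg_inj, div_eq_div_iff (by positivity) (by positivity)]
  have e4 : Real.sqrt (1 - x ^ 2) ^ 2 = 1 - x ^ 2 := Real.sq_sqrt hx2.le
  linear_combination (-(Real.sqrt (1 - (1 - h ^ 2) * x ^ 2) *
    (h * x ^ 2 - h * x ^ 4 + h ^ 3 * x ^ 4))) * e4

lemma aux_cont_F (h : ℝ) : ContinuousOn
    (fun x : ℝ => 1 / (Real.sqrt (1 - x ^ 2) * Real.sqrt (1 - (1 - h ^ 2) * x ^ 2)))
    (Ioo (0:ℝ) 1) := by
  apply ContinuousOn.div continuousOn_const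
  · exact ((Real.continuous_sqrt.comp (by continuity)).mul
      (Real.continuous_sqrt.comp (by continuity))).continuousOn
  · intro x hx
    have hx2 : 0 < 1 - x ^ 2 := by nlinarith [hx.1, hx.2]
    have hD := aux_D_pos hx h
    positivity

lemma aux_cont_f (h : ℝ) : ContinuousOn
    (fun x : ℝ => h * x ^ 2 / (Real.sqrt (1 - x ^ 2) *
      (Real.sqrt (1 - (1 - h ^ 2) * x ^ 2) * (1 - (1 - h ^ 2) * x ^ 2))))
    (Ioo (0:ℝ) 1) := by
  apply ContinuousOn.div (by fun_prop)
  · exact ((Real.continuous_sqrt.comp (by continuity)).mul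
      ((Real.continuous_sqrt.comp (by continuity)).mul (by continuity))).continuousOn
  · intro x hx
    have hx2 : 0 < 1 - x ^ 2 := by nlinarith [hx.1, hx.2]
    have hD := aux_D_pos hx h
    positivity

lemma aux_sqrt_one_sub_sq {x : ℝ} (hx : x ∈ Ioo (0:ℝ) 1) :
    Real.sqrt (1 - x) ≤ Real.sqrt (1 - x ^ 2) :=
  Real.sqrt_le_sqrt (by nlinarith [hx.1, hx.2])

/-- bound for `F h` itself -/
lemma aux_F_le {x h : ℝ} (hx : x ∈ Ioo (0:ℝ) 1) (hh : h ∈ Ioo (0:ℝ) 1) :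
    1 / (Real.sqrt (1 - x ^ 2) * Real.sqrt (1 - (1 - h ^ 2) * x ^ 2))
      ≤ (1 / h) * (1 / Real.sqrt (1 - x)) := by
  have hx1 : 0 < 1 - x := by linarith [hx.2]
  have hs : 0 < Real.sqrt (1 - x) := Real.sqrt_pos.2 hx1
  have hD : h ^ 2 ≤ 1 - (1 - h ^ 2) * x ^ 2 := by
    nlinarith [mul_nonneg (by nlinarith [hh.1, hh.2] : (0:ℝ) ≤ 1 - h ^ 2)
      (by nlinarith [hx.1, hx.2] : (0:ℝ) ≤ 1 - x ^ 2)]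
  have h1 : h ≤ Real.sqrt (1 - (1 - h ^ 2) * x ^ 2) := by
    calc h = Real.sqrt (h ^ 2) := (Real.sqrt_sq hh.1.le).symm
    _ ≤ _ := Real.sqrt_le_sqrt hD
  calc 1 / (Real.sqrt (1 - x ^ 2) * Real.sqrt (1 - (1 - h ^ 2) * x ^ 2))
      ≤ 1 / (Real.sqrt (1 - x) * h) := by
        apply div_le_div₀ zero_le_one le_rfl (mul_pos hs hh.1)
        exact mul_le_mul (aux_sqrt_one_sub_sq hx) h1 hh.1.le (Real.sqrt_nonneg _)
    _ = (1 / h) * (1 / Real.sqrt (1 - x)) := by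
        rw [div_mul_div_comm, one_mul, mul_comm]

lemma aux_Fd_bound {x h₀ h : ℝ} (hx : x ∈ Ioo (0:ℝ) 1) (h0 : h₀ ∈ Ioo (0:ℝ) 1)
    (hb : h ∈ Metric.ball h₀ (h₀ / 2)) :
    ‖-(h * x ^ 2 / (Real.sqrt (1 - x ^ 2) *
      (Real.sqrt (1 - (1 - h ^ 2) * x ^ 2) * (1 - (1 - h ^ 2) * x ^ 2))))‖
      ≤ (16 / h₀ ^ 3) * (1 / Real.sqrt (1 - x)) := by
  have hdist : |h - h₀| < h₀ / 2 := by simpa [Real.dist_eq] using hb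
  have habs := abs_lt.1 hdist
  have hl : h₀ / 2 < h := by linarith [habs.1]
  have hr : h < 3 * h₀ / 2 := by linarith [habs.2]
  have hh0 : 0 < h := lt_trans (by linarith [h0.1]) hl
  have hx1 : 0 < 1 - x := by linarith [hx.2]
  have hx2 : 0 < 1 - x ^ 2 := by nlinarith [hx.1, hx.2]
  have hs : 0 < Real.sqrt (1 - x) := Real.sqrt_pos.2 hx1
  have hD : 0 < 1 - (1 - h ^ 2) * x ^ 2 := aux_D_pos hx h
  have hD4 : h₀ ^ 2 / 4 ≤ 1 - (1 - h ^ 2) * x ^ 2 := by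
    nlinarith [mul_nonneg hx2.le (by nlinarith [h0.1, h0.2] : (0:ℝ) ≤ 1 - h₀ ^ 2 / 4),
      mul_nonneg (by nlinarith : (0:ℝ) ≤ h ^ 2 - h₀ ^ 2 / 4) (sq_nonneg x)]
  have hsD : h₀ / 2 ≤ Real.sqrt (1 - (1 - h ^ 2) * x ^ 2) :=
    (Real.le_sqrt (by linarith [h0.1]) hD.le).2 (by nlinarith)
  have hden : Real.sqrt (1 - x) * (h₀ ^ 3 / 8) ≤ Real.sqrt (1 - x ^ 2) *
      (Real.sqrt (1 - (1 - h ^ 2) * x ^ 2) * (1 - (1 - h ^ 2) * x ^ 2)) := by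
    have := mul_le_mul hsD hD4 (by positivity) (Real.sqrt_nonneg _)
    calc Real.sqrt (1 - x) * (h₀ ^ 3 / 8) = Real.sqrt (1 - x) * (h₀ / 2 * (h₀ ^ 2 / 4)) := by ring
    _ ≤ _ := mul_le_mul (aux_sqrt_one_sub_sq hx) this (by nlinarith [h0.1]) (Real.sqrt_nonneg _)
  rw [norm_neg, Real.norm_eq_abs, abs_of_nonneg (div_nonneg
    (mul_nonneg hh0.le (sq_nonneg x)) (mul_nonneg (Real.sqrt_nonneg _)
      (mul_nonneg (Real.sqrt_nonneg _) hD.le)))]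
  calc h * x ^ 2 / (Real.sqrt (1 - x ^ 2) *
        (Real.sqrt (1 - (1 - h ^ 2) * x ^ 2) * (1 - (1 - h ^ 2) * x ^ 2)))
      ≤ 2 / (Real.sqrt (1 - x) * (h₀ ^ 3 / 8)) := by
        apply div_le_div₀ (by norm_num) (by nlinarith [hx.1, hx.2, h0.2]) (mul_pos hs (div_pos (pow_pos h0.1 3) (by norm_num))) hden
    _ = (16 / h₀ ^ 3) * (1 / Real.sqrt (1 - x)) := by
        field_simp
        ring

lemma aux_sD_ge {x h : ℝ} (hx : x ∈ Ioo (0:ℝ) 1) (hh : h ∈ Ioo (0:ℝ) 1) :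
    Real.sqrt ((1 - x) + h ^ 2) / 2 ≤ Real.sqrt (1 - (1 - h ^ 2) * x ^ 2) := by
  have hA : (0:ℝ) < (1 - x) + h ^ 2 := by nlinarith [hx.2, hh.1]
  have := aux_key_ineq hx.1.le hx.2.le hh.1.le hh.2.le
  refine (Real.le_sqrt (by positivity) (aux_D_pos hx h).le).2 ?_
  rw [div_pow, Real.sq_sqrt hA.le]
  linarith

lemma aux_f_le_a {x h : ℝ} (hx : x ∈ Ioo (0:ℝ) 1) (hh : h ∈ Ioo (0:ℝ) 1) :
    h * x ^ 2 / (Real.sqrt (1 - x ^ 2) *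
      (Real.sqrt (1 - (1 - h ^ 2) * x ^ 2) * (1 - (1 - h ^ 2) * x ^ 2)))
      ≤ 8 * h / (1 - x) ^ 2 := by
  have hx1 : 0 < 1 - x := by linarith [hx.2]
  have hs : 0 < Real.sqrt (1 - x) := Real.sqrt_pos.2 hx1
  have hD := aux_D_pos hx h
  have hkey := aux_key_ineq hx.1.le hx.2.le hh.1.le hh.2.le
  have hA : Real.sqrt (1 - x) ≤ Real.sqrt ((1 - x) + h ^ 2) :=
    Real.sqrt_le_sqrt (by nlinarith [sq_nonneg h])
  have hden : (1 - x) ^ 2 / 8 ≤ Real.sqrt (1 - x ^ 2) *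
      (Real.sqrt (1 - (1 - h ^ 2) * x ^ 2) * (1 - (1 - h ^ 2) * x ^ 2)) := by
    have h1 : Real.sqrt (1 - x) / 2 ≤ Real.sqrt (1 - (1 - h ^ 2) * x ^ 2) :=
      le_trans (by linarith [hA]) (aux_sD_ge hx hh)
    have h2 : (1 - x) / 4 ≤ 1 - (1 - h ^ 2) * x ^ 2 := by nlinarith [sq_nonneg h]
    have h3 := mul_le_mul h1 h2 (by linarith) (Real.sqrt_nonneg _)
    calc (1 - x) ^ 2 / 8 = Real.sqrt (1 - x) * (Real.sqrt (1 - x) / 2 * ((1 - x) / 4)) := by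
          rw [show Real.sqrt (1-x) * (Real.sqrt (1-x) / 2 * ((1-x)/4))
            = Real.sqrt (1-x) * Real.sqrt (1-x) * (1-x) / 8 from by ring,
            Real.mul_self_sqrt hx1.le]
          ring
    _ ≤ _ := mul_le_mul (aux_sqrt_one_sub_sq hx) h3 (by positivity) (Real.sqrt_nonneg _)
  calc h * x ^ 2 / (Real.sqrt (1 - x ^ 2) *
        (Real.sqrt (1 - (1 - h ^ 2) * x ^ 2) * (1 - (1 - h ^ 2) * x ^ 2)))
      ≤ h / ((1 - x) ^ 2 / 8) := by
        apply div_le_div₀ hh.1.le (by nlinarith [mul_nonneg hh.1.le (by nlinarith [hx.1, hx.2] : (0:ℝ) ≤ 1 - x ^ 2)]) (by positivity) hden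
    _ = 8 * h / (1 - x) ^ 2 := by field_simp

lemma aux_f_le_b {x h : ℝ} (hx : x ∈ Ioo (0:ℝ) 1) (hh : h ∈ Ioo (0:ℝ) 1) :
    h * x ^ 2 / (Real.sqrt (1 - x ^ 2) *
      (Real.sqrt (1 - (1 - h ^ 2) * x ^ 2) * (1 - (1 - h ^ 2) * x ^ 2)))
      ≤ (8 / h ^ 2) * (1 / Real.sqrt (1 - x)) := by
  have hx1 : 0 < 1 - x := by linarith [hx.2]
  have hs : 0 < Real.sqrt (1 - x) := Real.sqrt_pos.2 hx1
  have hD := aux_D_pos hx h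
  have hkey := aux_key_ineq hx.1.le hx.2.le hh.1.le hh.2.le
  have hA : h ≤ Real.sqrt ((1 - x) + h ^ 2) := by
    rw [show h = Real.sqrt (h ^ 2) from (Real.sqrt_sq hh.1.le).symm]
    exact Real.sqrt_le_sqrt (by rw [Real.sq_sqrt (sq_nonneg h)] at *; linarith)
  have hden : Real.sqrt (1 - x) * (h ^ 3 / 8) ≤ Real.sqrt (1 - x ^ 2) *
      (Real.sqrt (1 - (1 - h ^ 2) * x ^ 2) * (1 - (1 - h ^ 2) * x ^ 2)) := by
    have h1 : h / 2 ≤ Real.sqrt (1 - (1 - h ^ 2) * x ^ 2) :=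
      le_trans (by linarith [hA]) (aux_sD_ge hx hh)
    have h2 : h ^ 2 / 4 ≤ 1 - (1 - h ^ 2) * x ^ 2 := by nlinarith [hx1]
    have h3 := mul_le_mul h1 h2 (by positivity) (Real.sqrt_nonneg _)
    calc Real.sqrt (1 - x) * (h ^ 3 / 8) = Real.sqrt (1 - x) * (h / 2 * (h ^ 2 / 4)) := by ring
    _ ≤ _ := mul_le_mul (aux_sqrt_one_sub_sq hx) h3 (by nlinarith [hh.1]) (Real.sqrt_nonneg _)
  calc h * x ^ 2 / (Real.sqrt (1 - x ^ 2) *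
        (Real.sqrt (1 - (1 - h ^ 2) * x ^ 2) * (1 - (1 - h ^ 2) * x ^ 2)))
      ≤ h / (Real.sqrt (1 - x) * (h ^ 3 / 8)) := by
        apply div_le_div₀ hh.1.le
          (by nlinarith [mul_nonneg hh.1.le (by nlinarith [hx.1, hx.2] : (0:ℝ) ≤ 1 - x ^ 2)])
          (mul_pos hs (div_pos (pow_pos hh.1 3) (by norm_num))) hden
    _ = (8 / h ^ 2) * (1 / Real.sqrt (1 - x)) := by
        rw [div_mul_div_comm,
          div_eq_div_iff (mul_pos hs (div_pos (pow_pos hh.1 3) (by norm_num))).ne'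
            (mul_pos (pow_pos hh.1 2) hs).ne']
        ring

lemma aux_f_ge {x h : ℝ} (hh : h ∈ Ioo (0:ℝ) 1)
    (hx : x ∈ Ioo (Real.sqrt (1 - h ^ 2 / 4)) (Real.sqrt (1 - h ^ 2 / 8))) :
    3 / 8 / h ^ 3 ≤ h * x ^ 2 / (Real.sqrt (1 - x ^ 2) *
      (Real.sqrt (1 - (1 - h ^ 2) * x ^ 2) * (1 - (1 - h ^ 2) * x ^ 2))) := by
  have hh1 : 0 < h := hh.1
  have hh2 : h < 1 := hh.2
  have ha0 : (0:ℝ) < 1 - h ^ 2 / 4 := by nlinarith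
  have hb1 : (1:ℝ) - h ^ 2 / 8 < 1 := by nlinarith
  have hxa : Real.sqrt (1 - h ^ 2 / 4) < x := hx.1
  have hxb : x < Real.sqrt (1 - h ^ 2 / 8) := hx.2
  have hx0 : 0 < x := lt_of_le_of_lt (Real.sqrt_nonneg _) hxa
  have hx1 : x < 1 := lt_of_lt_of_le hxb
    ((Real.sqrt_le_left zero_le_one).2 (by nlinarith))
  have hxIoo : x ∈ Ioo (0:ℝ) 1 := ⟨hx0, hx1⟩
  have hx2lo : 1 - h ^ 2 / 4 < x ^ 2 := (Real.sqrt_lt' hx0).1 hxa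
  have hx2hi : x ^ 2 < 1 - h ^ 2 / 8 := (Real.lt_sqrt hx0.le).1 hxb
  have hx2 : 0 < 1 - x ^ 2 := by nlinarith
  have hD := aux_D_pos hxIoo h
  have hs1 : Real.sqrt (1 - x ^ 2) ≤ h / 2 := by
    calc Real.sqrt (1 - x ^ 2) ≤ Real.sqrt ((h / 2) ^ 2) :=
          Real.sqrt_le_sqrt (by nlinarith)
    _ = h / 2 := Real.sqrt_sq (by linarith)
  have hD2 : 1 - (1 - h ^ 2) * x ^ 2 ≤ 2 * h ^ 2 := by nlinarith
  have hsD : Real.sqrt (1 - (1 - h ^ 2) * x ^ 2) ≤ 2 * h := by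
    calc Real.sqrt (1 - (1 - h ^ 2) * x ^ 2) ≤ Real.sqrt ((2 * h) ^ 2) :=
          Real.sqrt_le_sqrt (by nlinarith)
    _ = 2 * h := Real.sqrt_sq (by linarith)
  have hden : Real.sqrt (1 - x ^ 2) *
      (Real.sqrt (1 - (1 - h ^ 2) * x ^ 2) * (1 - (1 - h ^ 2) * x ^ 2)) ≤ 2 * h ^ 4 := by
    have h3 : Real.sqrt (1 - (1 - h ^ 2) * x ^ 2) * (1 - (1 - h ^ 2) * x ^ 2)
        ≤ 2 * h * (2 * h ^ 2) := mul_le_mul hsD hD2 hD.le (by linarith)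
    calc Real.sqrt (1 - x ^ 2) *
        (Real.sqrt (1 - (1 - h ^ 2) * x ^ 2) * (1 - (1 - h ^ 2) * x ^ 2))
        ≤ h / 2 * (2 * h * (2 * h ^ 2)) := by
          apply mul_le_mul hs1 h3 (mul_nonneg (Real.sqrt_nonneg _) hD.le) (by linarith)
    _ = 2 * h ^ 4 := by ring
  have hdenpos : 0 < Real.sqrt (1 - x ^ 2) *
      (Real.sqrt (1 - (1 - h ^ 2) * x ^ 2) * (1 - (1 - h ^ 2) * x ^ 2)) := by
    have := Real.sqrt_pos.2 hx2
    have := Real.sqrt_pos.2 hD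
    positivity
  calc (3:ℝ) / 8 / h ^ 3 = 3 / 4 * h / (2 * h ^ 4) := by
        rw [div_eq_div_iff (by positivity) (by positivity)]
        ring
  _ ≤ _ := by
        apply div_le_div₀ (mul_nonneg hh1.le (sq_nonneg x)) (by nlinarith) hdenpos hden

lemma aux_E1 {c : ℝ} (hc0 : 0 < c) (hc1 : c < 1) :
    ∫ x in Ioo (0:ℝ) c, (1 / (1 - x) ^ 2) = 1 / (1 - c) - 1 := by
  rw [← integral_Ioc_eq_integral_Ioo, ← intervalIntegral.integral_of_le hc0.le]
  have hderiv : ∀ x ∈ uIcc (0:ℝ) c, HasDerivAt (fun y : ℝ => (1 - y)⁻¹) (1 / (1 - x) ^ 2) x := by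
    intro x hx
    rw [uIcc_of_le hc0.le] at hx
    have hne : 1 - x ≠ 0 := by
      have := hx.2
      intro hcon; nlinarith
    have := ((hasDerivAt_id x).const_sub 1).inv hne
    refine this.congr_deriv (Eq.symm ?_)
    simp
  rw [intervalIntegral.integral_eq_sub_of_hasDerivAt hderiv]
  · norm_num
  · apply ContinuousOn.intervalIntegrable
    apply continuousOn_const.div (by fun_prop)
    intro x hx
    rw [uIcc_of_le hc0.le] at hx
    have hx2 : (0:ℝ) < 1 - x := by nlinarith [hx.2]
    positivity

lemma aux_E2 {c : ℝ} (hc0 : 0 < c) (hc1 : c < 1) :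
    ∫ x in Ioo c 1, (1 / Real.sqrt (1 - x)) = 2 * Real.sqrt (1 - c) := by
  rw [← integral_Ioc_eq_integral_Ioo, ← intervalIntegral.integral_of_le hc1.le]
  have h1 : (∫ x in c..(1:ℝ), (fun y : ℝ => 1 / Real.sqrt y) (1 - x))
      = ∫ y in (1-(1:ℝ))..(1-c), 1 / Real.sqrt y :=
    intervalIntegral.integral_comp_sub_left (fun y : ℝ => 1 / Real.sqrt y) 1
  simp only at h1
  rw [h1, show (1:ℝ) - 1 = 0 by norm_num]
  have h2 : ∀ y ∈ uIcc (0:ℝ) (1 - c), 1 / Real.sqrt y = y ^ (-(1:ℝ)/2) := by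
    intro y hy
    rw [uIcc_of_le (by linarith)] at hy
    rcases eq_or_lt_of_le hy.1 with h | h
    · rw [← h]; simp
    · rw [show (-(1:ℝ)/2) = -(1/2) by norm_num, Real.rpow_neg h.le, ← Real.sqrt_eq_rpow,
        one_div]
  rw [intervalIntegral.integral_congr h2, integral_rpow (Or.inl (by norm_num))]
  rw [Real.zero_rpow (by norm_num)]
  rw [show (-(1:ℝ)/2 + 1) = 1/2 by norm_num, ← Real.sqrt_eq_rpow]
  ring

/-- With `T(h) = 4∫₀¹ dx/(√(1−x²)·√(1−(1−h²)x²))`, the function `T` is differentiable on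
`(0,1)` with negative derivative, and there is `C > 1` such that
`1/(C h) ≤ −T'(h) ≤ C/h` for all `h ∈ (0,1)`. -/
theorem stmt_3
    (T : ℝ → ℝ)
    (hT : ∀ h ∈ Ioo (0:ℝ) 1, T h =
      4 * ∫ x in Ioo (0:ℝ) 1, 1 / (Real.sqrt (1 - x ^ 2) * Real.sqrt (1 - (1 - h ^ 2) * x ^ 2))) :
    ∃ C : ℝ, 1 < C ∧ ∀ h ∈ Ioo (0:ℝ) 1,
      ∃ d : ℝ, HasDerivAt T d h ∧ d < 0 ∧ 1 / (C * h) ≤ -d ∧ -d ≤ C / h := by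
  refine ⟨100, by norm_num, fun h hh => ?_⟩
  have hh1 : 0 < h := hh.1
  have hh2 : h < 1 := hh.2
  have key := hasDerivAt_integral_of_dominated_loc_of_deriv_le
    (μ := volume.restrict (Ioo (0:ℝ) 1)) (x₀ := h) (s := Metric.ball h (h/2))
    (F := fun h x => 1 / (Real.sqrt (1 - x ^ 2) * Real.sqrt (1 - (1 - h ^ 2) * x ^ 2)))
    (F' := fun h x => -(h * x ^ 2 / (Real.sqrt (1 - x ^ 2) *
      (Real.sqrt (1 - (1 - h ^ 2) * x ^ 2) * (1 - (1 - h ^ 2) * x ^ 2)))))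
    (bound := fun x => (16 / h ^ 3) * (1 / Real.sqrt (1 - x)))
    (Metric.ball_mem_nhds _ (by positivity))
    (Filter.Eventually.of_forall fun h' =>
      ((aux_cont_F h').aestronglyMeasurable measurableSet_Ioo))
    ?_
    (((aux_cont_f h).neg).aestronglyMeasurable measurableSet_Ioo)
    ?_
    (aux_int_sqrt.const_mul _)
    ?_
  rotate_left
  · -- integrability of F h
    refine ((aux_int_sqrt.const_mul (1/h)).mono
      ((aux_cont_F h).aestronglyMeasurable measurableSet_Ioo) ?_)
    filter_upwards [ae_restrict_mem measurableSet_Ioo] with x hx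
    have hx2 : 0 < 1 - x ^ 2 := by nlinarith [hx.1, hx.2]
    have hD := aux_D_pos hx h
    rw [Real.norm_eq_abs, Real.norm_eq_abs, abs_of_nonneg (by positivity),
      abs_of_nonneg (mul_nonneg (one_div_nonneg.2 hh1.le)
        (one_div_nonneg.2 (Real.sqrt_nonneg _)))]
    exact aux_F_le hx hh
  · -- bound
    filter_upwards [ae_restrict_mem measurableSet_Ioo] with x hx
    exact fun h' hb => aux_Fd_bound hx hh hb
  · -- differentiability
    filter_upwards [ae_restrict_mem measurableSet_Ioo] with x hx
    exact fun h' _ => aux_deriv hx h'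
  obtain ⟨hFd_int, hder⟩ := key
  have hf_int : IntegrableOn (fun x : ℝ => h * x ^ 2 / (Real.sqrt (1 - x ^ 2) *
      (Real.sqrt (1 - (1 - h ^ 2) * x ^ 2) * (1 - (1 - h ^ 2) * x ^ 2)))) (Ioo (0:ℝ) 1) := by
    have h1 := hFd_int.neg
    refine h1.congr (Filter.EventuallyEq.of_eq ?_)
    funext x
    simp
  set I : ℝ := ∫ x in Ioo (0:ℝ) 1, h * x ^ 2 / (Real.sqrt (1 - x ^ 2) *
      (Real.sqrt (1 - (1 - h ^ 2) * x ^ 2) * (1 - (1 - h ^ 2) * x ^ 2))) with hI_def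
  have hIeq : (∫ x in Ioo (0:ℝ) 1, -(h * x ^ 2 / (Real.sqrt (1 - x ^ 2) *
      (Real.sqrt (1 - (1 - h ^ 2) * x ^ 2) * (1 - (1 - h ^ 2) * x ^ 2))))) = - I :=
    integral_neg _
  have hf_nonneg : ∀ x ∈ Ioo (0:ℝ) 1, 0 ≤ h * x ^ 2 / (Real.sqrt (1 - x ^ 2) *
      (Real.sqrt (1 - (1 - h ^ 2) * x ^ 2) * (1 - (1 - h ^ 2) * x ^ 2))) := by
    intro x hx
    have hD := aux_D_pos hx h
    exact div_nonneg (mul_nonneg hh1.le (sq_nonneg x))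
      (mul_nonneg (Real.sqrt_nonneg _) (mul_nonneg (Real.sqrt_nonneg _) hD.le))
  -- lower bound for I
  have hlow : 3 / (128 * h) ≤ I := by
    set a := Real.sqrt (1 - h ^ 2 / 4) with ha_def
    set b := Real.sqrt (1 - h ^ 2 / 8) with hb_def
    have ha0 : (0:ℝ) < 1 - h ^ 2 / 4 := by nlinarith
    have hb0 : (0:ℝ) < 1 - h ^ 2 / 8 := by nlinarith
    have hab : a < b := Real.sqrt_lt_sqrt ha0.le (by nlinarith)
    have ha_pos : 0 < a := Real.sqrt_pos.2 ha0
    have hb_le : b ≤ 1 := (Real.sqrt_le_left zero_le_one).2 (by nlinarith)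
    have hS_sub : Ioo a b ⊆ Ioo (0:ℝ) 1 := fun x hx =>
      ⟨lt_trans ha_pos hx.1, lt_of_lt_of_le hx.2 hb_le⟩
    have hsq_a : a ^ 2 = 1 - h ^ 2 / 4 := Real.sq_sqrt ha0.le
    have hsq_b : b ^ 2 = 1 - h ^ 2 / 8 := Real.sq_sqrt hb0.le
    have hba : h ^ 2 / 16 ≤ b - a := by
      nlinarith [Real.sqrt_nonneg (1 - h ^ 2 / 4), Real.sqrt_nonneg (1 - h ^ 2 / 8)]
    have hstep1 : (3 / 8 / h ^ 3) * (volume (Ioo a b)).toReal ≤ ∫ x in Ioo a b,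
        h * x ^ 2 / (Real.sqrt (1 - x ^ 2) *
          (Real.sqrt (1 - (1 - h ^ 2) * x ^ 2) * (1 - (1 - h ^ 2) * x ^ 2))) := by
      refine le_trans (le_of_eq (mul_comm (3 / 8 / h ^ 3) ((volume (Ioo a b)).toReal))) (setIntegral_ge_of_const_le measurableSet_Ioo
        (by rw [Real.volume_Ioo]; exact ENNReal.ofReal_ne_top)
        (fun x hx => aux_f_ge hh hx)
        (hf_int.mono_set hS_sub))
    have hstep2 : (∫ x in Ioo a b, h * x ^ 2 / (Real.sqrt (1 - x ^ 2) *
        (Real.sqrt (1 - (1 - h ^ 2) * x ^ 2) * (1 - (1 - h ^ 2) * x ^ 2)))) ≤ I := by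
      apply setIntegral_mono_set hf_int
      · filter_upwards [ae_restrict_mem measurableSet_Ioo] with x hx using hf_nonneg x hx
      · exact HasSubset.Subset.eventuallyLE hS_sub
    have hvol : (volume (Ioo a b)).toReal = b - a := by
      rw [Real.volume_Ioo, ENNReal.toReal_ofReal (by linarith)]
    rw [hvol] at hstep1
    calc 3 / (128 * h) = (3 / 8 / h ^ 3) * (h ^ 2 / 16) := by
          field_simp; ring
    _ ≤ (3 / 8 / h ^ 3) * (b - a) := by
          apply mul_le_mul_of_nonneg_left hba (by positivity)
    _ ≤ I := le_trans hstep1 hstep2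
  -- upper bound for I
  have hup : I ≤ 24 / h := by
    set c : ℝ := 1 - h ^ 2 with hc_def
    have hc0 : 0 < c := by nlinarith
    have hc1 : c < 1 := by nlinarith
    have hsub1 : Ioo (0:ℝ) c ⊆ Ioo (0:ℝ) 1 := fun x hx => ⟨hx.1, lt_trans hx.2 hc1⟩
    have hsub2 : Ico c (1:ℝ) ⊆ Ioo (0:ℝ) 1 := fun x hx => ⟨lt_of_lt_of_le hc0 hx.1, hx.2⟩
    have hdisj : Disjoint (Ioo (0:ℝ) c) (Ico c 1) := by
      apply Set.disjoint_left.2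
      rintro x hx1 hx2
      exact absurd hx2.1 (not_le.2 hx1.2)
    have hsplit : I = (∫ x in Ioo (0:ℝ) c, h * x ^ 2 / (Real.sqrt (1 - x ^ 2) *
        (Real.sqrt (1 - (1 - h ^ 2) * x ^ 2) * (1 - (1 - h ^ 2) * x ^ 2))))
        + ∫ x in Ico c (1:ℝ), h * x ^ 2 / (Real.sqrt (1 - x ^ 2) *
        (Real.sqrt (1 - (1 - h ^ 2) * x ^ 2) * (1 - (1 - h ^ 2) * x ^ 2))) := by
      rw [hI_def, ← setIntegral_union hdisj measurableSet_Ico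
        (hf_int.mono_set hsub1) (hf_int.mono_set hsub2),
        Set.Ioo_union_Ico_eq_Ioo hc0 hc1.le]
    have hb1 : (∫ x in Ioo (0:ℝ) c, h * x ^ 2 / (Real.sqrt (1 - x ^ 2) *
        (Real.sqrt (1 - (1 - h ^ 2) * x ^ 2) * (1 - (1 - h ^ 2) * x ^ 2)))) ≤ 8 / h := by
      have hrhs_int : IntegrableOn (fun x : ℝ => (8 * h) * (1 / (1 - x) ^ 2)) (Ioo (0:ℝ) c) := by
        apply IntegrableOn.mono_set ?_ Set.Ioo_subset_Icc_self
        apply ContinuousOn.integrableOn_Icc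
        apply ContinuousOn.mul continuousOn_const
        apply continuousOn_const.div (by fun_prop)
        intro x hx
        have hx2 : (0:ℝ) < 1 - x := by nlinarith [hx.2]
        positivity
      have hmono := setIntegral_mono_on (hf_int.mono_set hsub1) hrhs_int measurableSet_Ioo
        (fun x hx => by rw [mul_one_div]; exact aux_f_le_a (hsub1 hx) hh)
      rw [MeasureTheory.integral_const_mul, aux_E1 hc0 hc1,
        show (1:ℝ) - c = h ^ 2 from by rw [hc_def]; ring] at hmono
      have he : 8 * h * (1 / h ^ 2 - 1) = 8 / h - 8 * h := by field_simp
      rw [he] at hmono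
      linarith
    have hb2 : (∫ x in Ico c (1:ℝ), h * x ^ 2 / (Real.sqrt (1 - x ^ 2) *
        (Real.sqrt (1 - (1 - h ^ 2) * x ^ 2) * (1 - (1 - h ^ 2) * x ^ 2)))) ≤ 16 / h := by
      have hrhs_int : IntegrableOn (fun x : ℝ => (8 / h ^ 2) * (1 / Real.sqrt (1 - x)))
          (Ico c (1:ℝ)) := by
        have : IntegrableOn (fun x : ℝ => (8 / h ^ 2) * (1 / Real.sqrt (1 - x)))
            (Ioo (0:ℝ) 1) := aux_int_sqrt.const_mul _
        exact this.mono_set hsub2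
      have hmono := setIntegral_mono_on (hf_int.mono_set hsub2) hrhs_int measurableSet_Ico
        (fun x hx => aux_f_le_b (hsub2 hx) hh)
      have hrhs : (∫ x in Ico c (1:ℝ), (8 / h ^ 2) * (1 / Real.sqrt (1 - x))) = 16 / h := by
        rw [integral_Ico_eq_integral_Ioo, MeasureTheory.integral_const_mul, aux_E2 hc0 hc1,
          show (1:ℝ) - c = h ^ 2 from by rw [hc_def]; ring, Real.sqrt_sq hh1.le]
        field_simp
        ring
      rw [hrhs] at hmono
      exact hmono
    have hsum : (8:ℝ) / h + 16 / h = 24 / h := by ring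
    rw [hsplit]
    linarith
  refine ⟨4 * ∫ x in Ioo (0:ℝ) 1, -(h * x ^ 2 / (Real.sqrt (1 - x ^ 2) *
      (Real.sqrt (1 - (1 - h ^ 2) * x ^ 2) * (1 - (1 - h ^ 2) * x ^ 2)))), ?_, ?_, ?_, ?_⟩
  · -- HasDerivAt T
    have h4 := hder.const_mul (4:ℝ)
    apply h4.congr_of_eventuallyEq
    filter_upwards [isOpen_Ioo.mem_nhds hh] with y hy
    exact hT y hy
  · -- d < 0
    rw [hIeq]
    have : 0 < I := lt_of_lt_of_le (by positivity) hlow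
    nlinarith
  · -- 1/(100h) ≤ -d
    rw [hIeq, show -(4 * -I) = 4 * I from by ring]
    calc 1 / (100 * h) ≤ 12 / (128 * h) := by
          rw [div_le_div_iff₀ (by positivity) (by positivity)]
          nlinarith
    _ = 4 * (3 / (128 * h)) := by ring
    _ ≤ 4 * I := by linarith
  · -- -d ≤ 100/h
    rw [hIeq, show -(4 * -I) = 4 * I from by ring]
    calc 4 * I ≤ 4 * (24 / h) := by linarith
    _ = 96 / h := by ring
    _ ≤ 100 / h := by
          rw [div_le_div_iff₀ hh1 hh1]
          nlinarith
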